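/- Let F be the subgroup of a free group 𝔽 generated by two elements α and β, and suppose: (i) α and β are both nontrivial; (ii) if F has rank 1, i.e. α = γ^m and β = γ^n for some γ ∈ 𝔽 with m, n nonzero integers, and the product βα is reduced (no cancellation between β and α as reduced words), then m and n have the same sign; (iii) the longest common prefix γ₀ = α ∧ β of α and β (as reduced words) is a proper prefix of both. Then, assuming βα is reduced as a concatenation, F is free of rank 2 (F ≅ 𝔽₂). -/

import Mathlib

namespace Stmt14
open FreeGroup List

variable {ι : Type} [DecidableEq ι]

/-- A word is reduced: no adjacent cancelling pair. -/
def IsRed (L : List (ι × Bool)) : Prop := List.Chain' (fun s t => t ≠ (s.1, !s.2)) L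

lemma pair_symm {s t : ι × Bool} : t = (s.1, !s.2) ↔ s = (t.1, !t.2) := by
  constructor <;> rintro rfl <;> simp [Prod.ext_iff]

lemma reduce_eq_self {L : List (ι × Bool)} (h : IsRed L) : FreeGroup.reduce L = L := by
  induction L with
  | nil => rfl
  | cons x L ih =>
    rw [FreeGroup.reduce.cons, ih h.tail]
    cases L with
    | nil => rfl
    | cons y t =>
      have hxy : y ≠ (x.1, !x.2) := (List.isChain_cons_cons.mp h).1
      have : ¬ (x.1 = y.1 ∧ x.2 = !y.2) := by
        rintro ⟨h1, h2⟩
        exact hxy (by simp [Prod.ext_iff, h1.symm, h2])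
      simp only [this, if_false]

lemma isRed_of_reduce {L : List (ι × Bool)} (h : FreeGroup.reduce L = L) : IsRed L := by
  induction L with
  | nil => exact List.isChain_nil
  | cons x L ih =>
    rw [FreeGroup.reduce.cons] at h
    have hlen : (FreeGroup.reduce L).length ≤ L.length := (FreeGroup.Red.length_le (FreeGroup.reduce.red))
    cases hL : FreeGroup.reduce L with
    | nil =>
      rw [hL] at h
      dsimp only at h
      have hL0 : L = [] := by injection h with h1 h2; exact h2.symm
      subst hL0
      exact List.isChain_singleton x
    | cons y t =>
      rw [hL] at h hlen
      dsimp only at h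
      by_cases hc : x.1 = y.1 ∧ x.2 = !y.2
      · rw [if_pos hc] at h
        have : t.length = L.length + 1 := by rw [h]; simp
        simp at hlen; omega
      · rw [if_neg hc] at h
        have hL' : L = y :: t := by injection h with h1 h2; exact h2.symm
        have hred : FreeGroup.reduce L = L := by rw [hL, hL']
        subst hL'
        refine List.isChain_cons_cons.mpr ⟨?_, ih hred⟩
        rintro rfl
        exact hc ⟨rfl, by simp⟩


lemma isRed_toWord (x : FreeGroup ι) : IsRed x.toWord := isRed_of_reduce x.reduce_toWord

lemma toWord_mul_of_isRed {x y : FreeGroup ι} (h : IsRed (x.toWord ++ y.toWord)) :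
    (x * y).toWord = x.toWord ++ y.toWord := by
  conv_lhs => rw [← FreeGroup.mk_toWord (x := x), ← FreeGroup.mk_toWord (x := y)]
  rw [FreeGroup.mul_mk, FreeGroup.toWord_mk, reduce_eq_self h]

lemma toWord_of_mk {L : List (ι × Bool)} (h : IsRed L) : (FreeGroup.mk L).toWord = L := by
  rw [FreeGroup.toWord_mk, reduce_eq_self h]

lemma length_flatten_replicate (k : ℕ) (L : List (ι × Bool)) :
    (List.replicate k L).flatten.length = k * L.length := by
  induction k with
  | zero => simp
  | succ k ih => simp [List.replicate_succ, ih, Nat.succ_mul, Nat.add_comm]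

lemma head?_flatten_replicate {k : ℕ} (hk : 1 ≤ k) (L : List (ι × Bool)) (hL : L ≠ []) :
    (List.replicate k L).flatten.head? = L.head? := by
  obtain ⟨j, rfl⟩ : ∃ j, k = j + 1 := ⟨k - 1, by omega⟩
  rw [List.replicate_succ, List.flatten_cons, List.head?_append_of_ne_nil _ hL]

lemma getLast?_flatten_replicate {k : ℕ} (hk : 1 ≤ k) (L : List (ι × Bool)) (hL : L ≠ []) :
    (List.replicate k L).flatten.getLast? = L.getLast? := by
  induction k with
  | zero => omega
  | succ k ih =>
    rcases Nat.eq_or_lt_of_le hk with h | h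
    · simp [← h]
    · have hk1 : 1 ≤ k := by omega
      rw [List.replicate_succ, List.flatten_cons, List.getLast?_append_of_ne_nil, ih hk1]
      intro hnil
      have := length_flatten_replicate (ι := ι) k L
      rw [hnil] at this
      simp at this
      rcases this with h' | h'
      · omega
      · exact hL h'

/-- Powers of a cyclically reduced element have concatenated words. -/
lemma pow_toWord {c : FreeGroup ι} (hcr : IsRed (c.toWord ++ c.toWord)) :
    ∀ k : ℕ, (c ^ k).toWord = (List.replicate k c.toWord).flatten := by
  intro k
  induction k with
  | zero => simp [FreeGroup.toWord_one]
  | succ k ih =>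
    rw [pow_succ', List.replicate_succ, List.flatten_cons, ← ih]
    by_cases hc : c.toWord = []
    · have : c = 1 := FreeGroup.toWord_eq_nil_iff.mp hc
      simp [this]
    apply toWord_mul_of_isRed
    rw [ih]
    rcases List.isChain_append.mp hcr with ⟨h1, _, hj⟩
    refine List.isChain_append.mpr ⟨h1, isRed_of_reduce (by rw [← ih]; exact FreeGroup.reduce_toWord _), ?_⟩
    intro x hx y hy
    rcases Nat.eq_zero_or_pos k with rfl | hk
    · simp at hy
    · rw [head?_flatten_replicate hk _ hc] at hy
      exact hj x hx y hy


lemma invRev_cons (x : ι × Bool) (l : List (ι × Bool)) :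
    FreeGroup.invRev (x :: l) = FreeGroup.invRev l ++ [(x.1, !x.2)] := by
  simp [FreeGroup.invRev]

lemma mid_head {A Y X X' : List (ι × Bool)} (hX : X ≠ []) (hX' : X' ≠ [])
    (hh : X.head? = X'.head?) : (A ++ X ++ Y).head? = (A ++ X' ++ Y).head? := by
  rw [List.append_assoc, List.append_assoc]
  cases A with
  | nil => simp only [List.nil_append]
           rw [List.head?_append_of_ne_nil _ hX, List.head?_append_of_ne_nil _ hX', hh]
  | cons a t => simp

lemma mid_last {A Y X X' : List (ι × Bool)} (hX : X ≠ []) (hX' : X' ≠ [])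
    (hl : X.getLast? = X'.getLast?) : (A ++ X ++ Y).getLast? = (A ++ X' ++ Y).getLast? := by
  cases Y with
  | nil =>
    simp only [List.append_nil]
    rw [List.getLast?_append_of_ne_nil _ hX, List.getLast?_append_of_ne_nil _ hX', hl]
  | cons y t =>
    rw [List.getLast?_append_of_ne_nil _ (by simp : (y :: t) ≠ []),
        List.getLast?_append_of_ne_nil _ (by simp : (y :: t) ≠ [])]

lemma sandwich {s v : ι × Bool} {X : List (ι × Bool)} (hX : IsRed X) (hXne : X ≠ [])
    (hhead : ∀ y ∈ X.head?, y ≠ (s.1, !s.2))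
    (hlast : ∀ x ∈ X.getLast?, v ≠ (x.1, !x.2)) :
    IsRed (s :: (X ++ [v])) := by
  refine List.isChain_cons.mpr ⟨?_, ?_⟩
  · intro y hy
    rw [List.head?_append_of_ne_nil _ hXne] at hy
    exact hhead y hy
  · refine List.isChain_append.mpr ⟨hX, List.isChain_singleton v, ?_⟩
    intro x hx y hy
    simp only [List.head?_cons, Option.mem_some_iff] at hy
    subst hy
    exact hlast x hx

lemma cyclic_decomp : ∀ (n : ℕ) (γ : FreeGroup ι), γ.toWord.length ≤ n → γ ≠ 1 →
    ∃ u c : FreeGroup ι, γ = u * c * u⁻¹ ∧ c ≠ 1 ∧ IsRed (c.toWord ++ c.toWord) ∧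
      ∀ k : ℕ, 1 ≤ k → (γ ^ k).toWord = u.toWord ++ (c ^ k).toWord ++ u⁻¹.toWord := by
  intro n
  induction n with
  | zero =>
    intro γ hlen hγ
    exact absurd (FreeGroup.toWord_eq_nil_iff.mp (List.length_eq_zero_iff.mp (Nat.le_zero.mp hlen))) hγ
  | succ n ih =>
    intro γ hlen hγ
    have hgne : γ.toWord ≠ [] := fun h => hγ (FreeGroup.toWord_eq_nil_iff.mp h)
    obtain ⟨s, g', hg'⟩ := List.exists_cons_of_ne_nil hgne
    by_cases hcyc : g'.getLast? = some (s.1, !s.2)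
    case neg =>
      -- γ is cyclically reduced: take u = 1, c = γ
      refine ⟨1, γ, by group, hγ, ?_, ?_⟩
      · refine List.isChain_append.mpr ⟨isRed_toWord γ, isRed_toWord γ, ?_⟩
        intro x hx y hy
        rw [hg'] at hx hy
        simp only [List.head?_cons, Option.mem_some_iff] at hy
        subst hy
        cases g' with
        | nil =>
          simp only [List.getLast?_singleton, Option.mem_some_iff] at hx
          subst hx
          simp [Prod.ext_iff]
        | cons b t =>
          rw [List.getLast?_cons_cons] at hx
          intro hh
          apply hcyc
          rw [Option.mem_def] at hx
          rw [hx]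
          congr 1
          exact pair_symm.mpr hh
      · intro k hk
        simp only [FreeGroup.toWord_one, inv_one]
        simp
    case pos =>
      have hg'ne : g' ≠ [] := by rintro rfl; simp at hcyc
      set g'' := g'.dropLast with hg''def
      have hsplit : g' = g'' ++ [(s.1, !s.2)] := by
        have h1 := List.dropLast_append_getLast hg'ne
        have h2 : g'.getLast hg'ne = (s.1, !s.2) := by
          rw [List.getLast?_eq_getLast hg'ne] at hcyc
          exact Option.some_inj.mp hcyc
        rw [hg''def, ← h2]
        exact h1.symm
      have hgsplit : γ.toWord = s :: (g'' ++ [(s.1, !s.2)]) := by rw [hg', hsplit]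
      have hfull : IsRed (s :: (g'' ++ [(s.1, !s.2)])) := hgsplit ▸ isRed_toWord γ
      obtain ⟨hhead_full, htail⟩ := List.isChain_cons.mp hfull
      obtain ⟨hch_g'', _, hjlast⟩ := List.isChain_append.mp htail
      have hg''ne : g'' ≠ [] := by
        intro h0
        exact (hhead_full (s.1, !s.2) (by rw [h0]; simp)) rfl
      have hj1 : ∀ y ∈ g''.head?, y ≠ (s.1, !s.2) := by
        intro y hy
        exact hhead_full y (by rwa [List.head?_append_of_ne_nil _ hg''ne])
      have hj2 : ∀ x ∈ g''.getLast?, (s.1, !s.2) ≠ (x.1, !x.2) := by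
        intro x hx
        exact hjlast x hx (s.1, !s.2) (by simp)
      -- the middle element
      set γ' : FreeGroup ι := FreeGroup.mk g'' with hγ'def
      have hγ'w : γ'.toWord = g'' := toWord_of_mk hch_g''
      have hγ'ne : γ' ≠ 1 := by
        intro h
        rw [h, FreeGroup.toWord_one] at hγ'w
        exact hg''ne hγ'w.symm
      have hlen'' : γ'.toWord.length ≤ n := by
        rw [hγ'w]
        have : γ.toWord.length = g''.length + 2 := by rw [hgsplit]; simp
        omega
      obtain ⟨u', c', h1, h2, h3, h4⟩ := ih γ' hlen'' hγ'ne
      set σ : FreeGroup ι := FreeGroup.mk [s] with hσdef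
      have hσinv : σ⁻¹ = FreeGroup.mk [(s.1, !s.2)] := by
        rw [hσdef, FreeGroup.inv_mk]
        simp [FreeGroup.invRev]
      have hγσ : γ = σ * γ' * σ⁻¹ := by
        rw [hσinv, hσdef, hγ'def, FreeGroup.mul_mk, FreeGroup.mul_mk]
        conv_lhs => rw [← FreeGroup.mk_toWord (x := γ), hgsplit]
        congr 1
      have hconj : ∀ j : ℕ, γ ^ j = σ * γ' ^ j * σ⁻¹ := by
        intro j
        rw [hγσ]
        induction j with
        | zero => group
        | succ j ihj => rw [pow_succ, ihj, pow_succ]; group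
      -- words of powers of c'
      have hcw_ne : c'.toWord ≠ [] := fun h => h2 (FreeGroup.toWord_eq_nil_iff.mp h)
      have hck_ne : ∀ k : ℕ, 1 ≤ k → (c' ^ k).toWord ≠ [] := by
        intro k hk h
        have := congrArg List.length h
        rw [pow_toWord h3, length_flatten_replicate] at this
        simp only [List.length_nil] at this
        rcases Nat.mul_eq_zero.mp this with h' | h'
        · omega
        · exact hcw_ne (List.length_eq_zero_iff.mp h')
      have hck_head : ∀ k : ℕ, 1 ≤ k → (c' ^ k).toWord.head? = c'.toWord.head? := by
        intro k hk
        rw [pow_toWord h3, head?_flatten_replicate hk _ hcw_ne]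
      have hck_last : ∀ k : ℕ, 1 ≤ k → (c' ^ k).toWord.getLast? = c'.toWord.getLast? := by
        intro k hk
        rw [pow_toWord h3, getLast?_flatten_replicate hk _ hcw_ne]
      have hg''eq : g'' = u'.toWord ++ (c' ^ 1).toWord ++ u'⁻¹.toWord := by
        rw [← hγ'w, ← h4 1 le_rfl, pow_one]
      -- words of powers of γ'
      have hW_head : ∀ k : ℕ, 1 ≤ k → (γ' ^ k).toWord.head? = g''.head? := by
        intro k hk
        rw [h4 k hk, hg''eq]
        exact mid_head (hck_ne k hk) (hck_ne 1 le_rfl) (by rw [hck_head k hk, hck_head 1 le_rfl])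
      have hW_last : ∀ k : ℕ, 1 ≤ k → (γ' ^ k).toWord.getLast? = g''.getLast? := by
        intro k hk
        rw [h4 k hk, hg''eq]
        exact mid_last (hck_ne k hk) (hck_ne 1 le_rfl) (by rw [hck_last k hk, hck_last 1 le_rfl])
      have hW_ne : ∀ k : ℕ, 1 ≤ k → (γ' ^ k).toWord ≠ [] := by
        intro k hk h
        have h5 := hW_head k hk
        rw [h, List.head?_nil] at h5
        exact hg''ne (List.head?_eq_none_iff.mp h5.symm)
      -- toWord of σ * u'
      have hσu'w : (σ * u').toWord = s :: u'.toWord := by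
        have hmk : σ * u' = FreeGroup.mk ([s] ++ u'.toWord) := by
          rw [hσdef, ← FreeGroup.mk_toWord (x := u'), FreeGroup.mul_mk, FreeGroup.mk_toWord]
        rw [hmk]
        cases htu : u'.toWord with
        | nil => rw [List.append_nil]; exact toWord_of_mk (List.isChain_singleton s)
        | cons a t =>
          apply toWord_of_mk
          refine List.isChain_cons.mpr ⟨?_, htu ▸ isRed_toWord u'⟩
          intro y hy
          obtain rfl : y = a := by simpa [eq_comm] using hy
          apply hj1
          rw [hg''eq, pow_one, List.head?_append_of_ne_nil _ (by rw [htu]; simp),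
              List.head?_append_of_ne_nil _ (by rw [htu]; simp), htu]
          rfl
      refine ⟨σ * u', c', by rw [hγσ, h1]; group, h2, h3, ?_⟩
      intro k hk
      have hmkW : γ ^ k = FreeGroup.mk ([s] ++ ((γ' ^ k).toWord ++ [(s.1, !s.2)])) := by
        rw [hconj k, hσinv, hσdef]
        conv_lhs => rw [← FreeGroup.mk_toWord (x := γ' ^ k)]
        rw [FreeGroup.mul_mk, FreeGroup.mul_mk, List.append_assoc]
      have hIsRedW : IsRed ([s] ++ ((γ' ^ k).toWord ++ [(s.1, !s.2)])) := by
        apply sandwich (isRed_toWord _) (hW_ne k hk)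
        · intro y hy
          exact hj1 y (by rwa [← hW_head k hk])
        · intro x hx
          exact hj2 x (by rwa [← hW_last k hk])
      rw [hmkW, toWord_of_mk hIsRedW, hσu'w, FreeGroup.toWord_inv, hσu'w, invRev_cons,
          h4 k hk, FreeGroup.toWord_inv]
      simp

lemma pow_words_of_red {γ : FreeGroup ι} (hγ : γ ≠ 1) {m n : ℕ} (hm : 1 ≤ m) (hn : 1 ≤ n)
    (hlen : (γ ^ (n + m)).toWord.length = (γ ^ n).toWord.length + (γ ^ m).toWord.length) :
    ∀ k : ℕ, (γ ^ k).toWord = (List.replicate k γ.toWord).flatten := by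
  obtain ⟨u, c, h1, h2, h3, h4⟩ := cyclic_decomp γ.toWord.length γ le_rfl hγ
  have hcl : ∀ k, 1 ≤ k → (c ^ k).toWord.length = k * c.toWord.length := by
    intro k hk; rw [pow_toWord h3, length_flatten_replicate]
  have hul : u⁻¹.toWord.length = u.toWord.length := by
    rw [FreeGroup.toWord_inv, FreeGroup.invRev_length]
  have hL : ∀ k, 1 ≤ k →
      (γ ^ k).toWord.length = u.toWord.length + k * c.toWord.length + u.toWord.length := by
    intro k hk
    rw [h4 k hk]
    simp only [List.length_append, hcl k hk, hul]
  have h0 : u.toWord.length = 0 := by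
    have e1 := hL (n + m) (by omega)
    have e2 := hL n hn
    have e3 := hL m hm
    rw [e1, e2, e3] at hlen
    have hd : (n + m) * c.toWord.length = n * c.toWord.length + m * c.toWord.length := by ring
    omega
  have hu1 : u = 1 := FreeGroup.toWord_eq_nil_iff.mp (List.length_eq_zero_iff.mp h0)
  have hγc : γ = c := by rw [h1, hu1]; group
  intro k
  rw [hγc, pow_toWord h3]

lemma no_cyclic {α β γ₀ : FreeGroup ι} (hα : α ≠ 1)
    (hγ₀α : γ₀.toWord <:+ α.toWord) (hγ₀β : γ₀.toWord <:+ β.toWord)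
    (hγ₀max : ∀ δ : FreeGroup ι, δ.toWord <:+ α.toWord → δ.toWord <:+ β.toWord →
      δ.toWord.length ≤ γ₀.toWord.length)
    (hproper₁ : γ₀ ≠ α) (hproper₂ : γ₀ ≠ β)
    (hred : (β * α).toWord = β.toWord ++ α.toWord)
    (γ : FreeGroup ι) (M N : ℕ) (hM : 1 ≤ M) (hN : 1 ≤ N)
    (hαeq : α = γ ^ M) (hβeq : β = γ ^ N) : False := by
  have hγ1 : γ ≠ 1 := by rintro rfl; rw [one_pow] at hαeq; exact hα hαeq
  have hlen : (γ ^ (N + M)).toWord.length = (γ ^ N).toWord.length + (γ ^ M).toWord.length := by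
    rw [pow_add, ← hαeq, ← hβeq, hred, List.length_append]
  have hw := pow_words_of_red hγ1 hM hN hlen
  have hgne : γ.toWord ≠ [] := fun h => hγ1 (FreeGroup.toWord_eq_nil_iff.mp h)
  have hgpos : 1 ≤ γ.toWord.length := by
    cases h : γ.toWord with
    | nil => exact absurd h hgne
    | cons a t => simp
  set k := min M N with hkdef
  have hsuf : ∀ (P : ℕ), k ≤ P → (γ ^ k).toWord <:+ (γ ^ P).toWord := by
    intro P hP
    rw [hw k, hw P]
    refine ⟨(List.replicate (P - k) γ.toWord).flatten, ?_⟩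
    rw [← List.flatten_append, ← List.replicate_add]
    congr 2
    omega
  have hδ := hγ₀max (γ ^ k) (hαeq ▸ hsuf M (Nat.min_le_left M N))
    (hβeq ▸ hsuf N (Nat.min_le_right M N))
  have hlk : (γ ^ k).toWord.length = k * γ.toWord.length := by
    rw [hw k, length_flatten_replicate]
  have hltα : γ₀.toWord.length < M * γ.toWord.length := by
    have hle := List.IsSuffix.length_le hγ₀α
    have hne : γ₀.toWord.length ≠ α.toWord.length := fun h =>
      hproper₁ (FreeGroup.toWord_injective (List.IsSuffix.eq_of_length hγ₀α h))
    have hαl : α.toWord.length = M * γ.toWord.length := by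
      rw [hαeq, hw M, length_flatten_replicate]
    omega
  have hltβ : γ₀.toWord.length < N * γ.toWord.length := by
    have hle := List.IsSuffix.length_le hγ₀β
    have hne : γ₀.toWord.length ≠ β.toWord.length := fun h =>
      hproper₂ (FreeGroup.toWord_injective (List.IsSuffix.eq_of_length hγ₀β h))
    have hβl : β.toWord.length = N * γ.toWord.length := by
      rw [hβeq, hw N, length_flatten_replicate]
    omega
  rw [hlk] at hδ
  rcases min_choice M N with h | h <;> rw [← hkdef] at * <;> rw [h] at hδ <;> omega

end Stmt14


/-- Let `α, β` be elements of a free group, identified with their reduced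
words (initial segments of a path are suffixes of the reduced word, words being read
from the right). Suppose: (i) `α` and `β` are nontrivial; (ii) if `α = γ^m`, `β = γ^n`
with `m, n` nonzero and the concatenation `βα` is reduced, then `m` and `n` have the
same sign; (iii) the longest common initial segment `γ₀` of `α` and `β` is a proper
initial segment of both. Then, assuming the concatenation `βα` is reduced, the
subgroup `⟨α, β⟩` is free of rank `2`. -/
theorem stmt14 {ι : Type} [DecidableEq ι] (α β γ₀ : FreeGroup ι)
    (hα : α ≠ 1) (hβ : β ≠ 1)
    (hrank1 : ∀ (γ : FreeGroup ι) (m n : ℤ), m ≠ 0 → n ≠ 0 →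
      α = γ ^ m → β = γ ^ n →
      (β * α).toWord = β.toWord ++ α.toWord → (0 < m ↔ 0 < n))
    (hγ₀α : γ₀.toWord <:+ α.toWord) (hγ₀β : γ₀.toWord <:+ β.toWord)
    (hγ₀max : ∀ δ : FreeGroup ι, δ.toWord <:+ α.toWord → δ.toWord <:+ β.toWord →
      δ.toWord.length ≤ γ₀.toWord.length)
    (hproper₁ : γ₀ ≠ α) (hproper₂ : γ₀ ≠ β)
    (hred : (β * α).toWord = β.toWord ++ α.toWord) :
    Nonempty ((Subgroup.closure ({α, β} : Set (FreeGroup ι))) ≃* FreeGroup (Fin 2)) := by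
  classical
  set H := Subgroup.closure ({α, β} : Set (FreeGroup ι)) with hHdef
  have hαH : α ∈ H := Subgroup.subset_closure (by simp)
  have hβH : β ∈ H := Subgroup.subset_closure (by simp)
  set α' : H := ⟨α, hαH⟩ with hα'def
  set β' : H := ⟨β, hβH⟩ with hβ'def
  set S := IsFreeGroup.Generators H with hSdef
  set e : H ≃* FreeGroup S := IsFreeGroup.toFreeGroup H with hedef
  have hgen : Subgroup.closure ({α', β'} : Set H) = ⊤ := by
    have h := Subgroup.closure_preimage_eq_top ({α, β} : Set (FreeGroup ι))
    rw [← h]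
    congr 1
    ext x
    simp only [Set.mem_insert_iff, Set.mem_singleton_iff, Set.mem_preimage,
      Subgroup.coe_subtype, hα'def, hβ'def, Subtype.ext_iff]
  set φ : H →* Multiplicative (S →₀ ℤ) :=
    (FreeGroup.lift (fun s => Multiplicative.ofAdd (Finsupp.single s (1:ℤ)))).comp
      e.toMonoidHom with hφdef
  have hφsurj : ∀ f : S →₀ ℤ, ∃ h : H, φ h = Multiplicative.ofAdd f := by
    intro f
    induction f using Finsupp.induction with
    | zero => exact ⟨1, by simp⟩
    | single_add a b f _ _ ih =>
      obtain ⟨h, hh⟩ := ih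
      refine ⟨e.symm (FreeGroup.of a ^ b) * h, ?_⟩
      rw [map_mul, hh]
      have h1 : φ (e.symm (FreeGroup.of a ^ b)) = Multiplicative.ofAdd (Finsupp.single a b) := by
        rw [hφdef]
        simp only [MonoidHom.comp_apply, MulEquiv.coe_toMonoidHom, MulEquiv.apply_symm_apply]
        rw [map_zpow, FreeGroup.lift_apply_of, ← ofAdd_zsmul, Finsupp.smul_single, smul_eq_mul,
          mul_one]
      rw [h1, ← ofAdd_add]
  -- span of the two images is everything
  have hspan : ∀ f : S →₀ ℤ,
      f ∈ Submodule.span ℤ ({(φ α').toAdd, (φ β').toAdd} : Set (S →₀ ℤ)) := by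
    intro f
    obtain ⟨h, hh⟩ := hφsurj f
    have key : ∀ h' : H, (φ h').toAdd ∈
        Submodule.span ℤ ({(φ α').toAdd, (φ β').toAdd} : Set (S →₀ ℤ)) := by
      intro h'
      have hmem : h' ∈ Subgroup.closure ({α', β'} : Set H) := hgen ▸ Subgroup.mem_top h'
      induction hmem using Subgroup.closure_induction with
      | mem x hx =>
        rcases hx with hx | hx <;> subst hx
        · exact Submodule.subset_span (by simp)
        · exact Submodule.subset_span (by simp)
      | one => simp
      | mul x y hx hy ihx ihy =>
        rw [map_mul, toAdd_mul]
        exact Submodule.add_mem _ ihx ihy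
      | inv x hx ihx =>
        rw [map_inv, toAdd_inv]
        exact Submodule.neg_mem _ ihx
    have := key h
    rw [hh] at this
    simpa using this
  have hrankS : Cardinal.mk S ≤ 2 := by
    have h1 : Module.rank ℤ (S →₀ ℤ) = Cardinal.mk S := by
      simpa using rank_finsupp_self' (R := ℤ) (ι := S)
    have h2 : Submodule.span ℤ ({(φ α').toAdd, (φ β').toAdd} : Set (S →₀ ℤ)) = ⊤ :=
      eq_top_iff.mpr fun f _ => hspan f
    have h3 := rank_span_le (R := ℤ) ({(φ α').toAdd, (φ β').toAdd} : Set (S →₀ ℤ))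
    rw [h2, rank_top, h1] at h3
    refine h3.trans ?_
    refine (Cardinal.mk_insert_le).trans ?_
    rw [Cardinal.mk_singleton]
    norm_num
  have hfin : Finite S := by
    rw [← Cardinal.lt_aleph0_iff_finite]
    exact hrankS.trans_lt (by exact_mod_cast Cardinal.nat_lt_aleph0 2)
  letI : Fintype S := Fintype.ofFinite S
  have hcard : Fintype.card S ≤ 2 := by
    have := hrankS
    rw [Cardinal.mk_fintype] at this
    exact_mod_cast this
  interval_cases hc : Fintype.card S
  · -- card 0 : impossible, H nontrivial
    exfalso
    haveI : IsEmpty S := Fintype.card_eq_zero_iff.mp hc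
    have hα1 : α' ≠ 1 := by
      intro hh
      exact hα (by simpa [hα'def, Subtype.ext_iff] using hh)
    have hword : (e α').toWord = [] := by
      cases hW : (e α').toWord with
      | nil => rfl
      | cons a t => exact (IsEmpty.false a.1).elim
    exact hα1 (e.injective (by rw [FreeGroup.toWord_eq_nil_iff.mp hword, map_one]))
  · -- card 1 : H cyclic, contradiction with no_cyclic
    exfalso
    have hSunit : Nonempty (S ≃ Unit) := ⟨Fintype.equivOfCardEq (by rw [hc]; simp)⟩
    obtain ⟨u⟩ := hSunit
    set e1 : H ≃* FreeGroup Unit := e.trans (FreeGroup.freeGroupCongr u) with he1def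
    have hcyc : ∀ x : FreeGroup Unit, ∃ z : ℤ, x = FreeGroup.of () ^ z := by
      intro x
      induction x using FreeGroup.induction_on with
      | C1 => exact ⟨0, by simp⟩
      | of a => exact ⟨1, by cases a; rw [zpow_one]⟩
      | inv_of a ih =>
        obtain ⟨z, hz⟩ := ih
        exact ⟨-z, by rw [zpow_neg, ← hz]⟩
      | mul x y ihx ihy =>
        obtain ⟨z1, hz1⟩ := ihx
        obtain ⟨z2, hz2⟩ := ihy
        exact ⟨z1 + z2, by rw [hz1, hz2, zpow_add]⟩
    set γ' : H := e1.symm (FreeGroup.of ()) with hγ'def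
    obtain ⟨m, hm⟩ := hcyc (e1 α')
    obtain ⟨n, hn⟩ := hcyc (e1 β')
    have hαm : α' = γ' ^ m := by
      apply e1.injective
      rw [map_zpow, hγ'def, MulEquiv.apply_symm_apply, hm]
    have hβn : β' = γ' ^ n := by
      apply e1.injective
      rw [map_zpow, hγ'def, MulEquiv.apply_symm_apply, hn]
    set γ : FreeGroup ι := (γ' : FreeGroup ι) with hγdef
    have hαγ : α = γ ^ m := by
      have := congrArg (Subtype.val) hαm
      rwa [SubgroupClass.coe_zpow] at this
    have hβγ : β = γ ^ n := by
      have := congrArg (Subtype.val) hβn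
      rwa [SubgroupClass.coe_zpow] at this
    have hm0 : m ≠ 0 := by rintro rfl; rw [zpow_zero] at hαγ; exact hα hαγ
    have hn0 : n ≠ 0 := by rintro rfl; rw [zpow_zero] at hβγ; exact hβ hβγ
    have hsign := hrank1 γ m n hm0 hn0 hαγ hβγ hred
    by_cases hmp : 0 < m
    · have hnp : 0 < n := hsign.mp hmp
      refine Stmt14.no_cyclic hα hγ₀α hγ₀β hγ₀max hproper₁ hproper₂ hred γ m.toNat n.toNat
        (by omega) (by omega) ?_ ?_
      · rw [hαγ, ← zpow_natCast]; congr 1; omega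
      · rw [hβγ, ← zpow_natCast]; congr 1; omega
    · have hmn : m < 0 := by omega
      have hnn : n < 0 := by
        by_contra hcon
        exact hmp (hsign.mpr (by omega))
      refine Stmt14.no_cyclic hα hγ₀α hγ₀β hγ₀max hproper₁ hproper₂ hred γ⁻¹ (-m).toNat (-n).toNat
        (by omega) (by omega) ?_ ?_
      · rw [hαγ, ← zpow_natCast, inv_zpow, ← zpow_neg]; congr 1; omega
      · rw [hβγ, ← zpow_natCast, inv_zpow, ← zpow_neg]; congr 1; omega
  · -- card 2
    exact ⟨e.trans (FreeGroup.freeGroupCongr (Fintype.equivFinOfCardEq hc))⟩
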